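/- Let U and V be open ℝ₊-connected subsets of X. Then U ∪ (V ∩ ℝ₊(U ∩ V)) is ℝ₊-connected. (Step (ii) in the proof of Lemma 1.17 of the paper.) -/
import Mathlib


/-- The multiplicative group of positive real numbers. -/
abbrev Rpos : Type := {t : ℝ // 0 < t}

/-- The saturation `ℝ₊S = {t • x : t ∈ ℝ₊, x ∈ S}` of a set `S`. -/
def RposSat {X : Type*} [SMul Rpos X] (S : Set X) : Set X :=
  {y | ∃ (t : Rpos) (x : X), x ∈ S ∧ t • x = y}

/-- A set `S` is `ℝ₊`-connected if its intersection with every orbit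
`ℝ₊x = {t • x : t ∈ ℝ₊}` is connected or empty (i.e. preconnected). -/
def RposConnected {X : Type*} [TopologicalSpace X] [SMul Rpos X] (S : Set X) : Prop :=
  ∀ x : X, IsPreconnected (S ∩ Set.range (fun t : Rpos => t • x))

/-- Every orbit is contractible: for each `x`, either `x` is a fixed point of the action,
or the orbit map `t ↦ t • x` is a homeomorphism of `ℝ₊` onto the orbit `ℝ₊x` endowed with
its subspace topology (i.e. it is a topological embedding). -/
def OrbitHyp (X : Type*) [TopologicalSpace X] [SMul Rpos X] : Prop :=
  ∀ x : X, (∀ t : Rpos, t • x = x) ∨ Topology.IsEmbedding (fun t : Rpos => t • x)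

/-- Step (ii) in the proof of Lemma 1.17: if `U` and `V` are open `ℝ₊`-connected subsets
of `X`, then `U ∪ (V ∩ ℝ₊(U ∩ V))` is `ℝ₊`-connected. -/
theorem stmt_2 {X : Type*} [TopologicalSpace X] [MulAction Rpos X] [ContinuousSMul Rpos X]
    (horb : OrbitHyp X) (U V : Set X)
    (hUo : IsOpen U) (hVo : IsOpen V)
    (hUc : RposConnected U) (hVc : RposConnected V) :
    RposConnected (U ∪ (V ∩ RposSat (U ∩ V))) := by
  intro x
  set b := Set.range (fun t : Rpos => t • x) with hb
  have key : ∀ (t r : Rpos) (z : X), t • z = r • x →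
      (⟨t.1⁻¹ * r.1, mul_pos (inv_pos.2 t.2) r.2⟩ : Rpos) • x = z := by
    intro t r z h
    have : (⟨t.1⁻¹, inv_pos.2 t.2⟩ : Rpos) • (t • z)
        = (⟨t.1⁻¹, inv_pos.2 t.2⟩ : Rpos) • (r • x) := by rw [h]
    rw [smul_smul, smul_smul] at this
    have h1 : (⟨t.1⁻¹, inv_pos.2 t.2⟩ : Rpos) * t = 1 := by
      ext; exact inv_mul_cancel₀ (ne_of_gt t.2)
    have h2 : (⟨t.1⁻¹, inv_pos.2 t.2⟩ : Rpos) * r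
        = (⟨t.1⁻¹ * r.1, mul_pos (inv_pos.2 t.2) r.2⟩ : Rpos) := by ext; rfl
    rw [h1, h2, one_smul] at this
    exact this.symm
  by_cases h : (U ∩ V ∩ b).Nonempty
  · obtain ⟨x₀, ⟨hx₀U, hx₀V⟩, hx₀b⟩ := h
    have hS : (U ∪ (V ∩ RposSat (U ∩ V))) ∩ b = (U ∩ b) ∪ (V ∩ b) := by
      ext y
      constructor
      · rintro ⟨hy, hyb⟩
        rcases hy with hyU | ⟨hyV, _⟩
        · exact Or.inl ⟨hyU, hyb⟩
        · exact Or.inr ⟨hyV, hyb⟩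
      · rintro (⟨hyU, hyb⟩ | ⟨hyV, hyb⟩)
        · exact ⟨Or.inl hyU, hyb⟩
        · refine ⟨Or.inr ⟨hyV, ?_⟩, hyb⟩
          obtain ⟨r, hr⟩ := hyb
          obtain ⟨r₀, hr₀⟩ := hx₀b
          refine ⟨⟨r.1 * r₀.1⁻¹, mul_pos r.2 (inv_pos.2 r₀.2)⟩, x₀, ⟨hx₀U, hx₀V⟩, ?_⟩
          rw [← hr₀, ← hr, smul_smul]
          congr 1
          ext
          simp [inv_mul_cancel₀ (ne_of_gt r₀.2), mul_assoc]
    rw [hS]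
    exact (hUc x).union x₀ ⟨hx₀U, hx₀b⟩ ⟨hx₀V, hx₀b⟩ (hVc x)
  · have hS : (U ∪ (V ∩ RposSat (U ∩ V))) ∩ b = U ∩ b := by
      ext y
      constructor
      · rintro ⟨hy, hyb⟩
        rcases hy with hyU | ⟨hyV, t, z, hz, rfl⟩
        · exact ⟨hyU, hyb⟩
        · exfalso
          apply h
          obtain ⟨r, hr⟩ := hyb
          exact ⟨z, hz, ⟨_, key t r z hr.symm⟩⟩
      · rintro ⟨hyU, hyb⟩
        exact ⟨Or.inl hyU, hyb⟩
    rw [hS]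
    exact hUc x
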